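/- The coefficients $b_r = \frac{2}{\pi} \frac{((\frac{r}{r-2})^2-1)((r-2)!!)^2}{r!}$ defined for odd integers $r \geq 3$ satisfy $b_3 = \frac{8}{3\pi}$, $b_r \geq 0$ for all odd $r \geq 3$, and $\sum_{r \in 2\mathbb{N}+3} b_r = 1$. -/

import Mathlib

open Real Nat

/-- The coefficient `b_r` for odd `r = 2n+3`. -/
noncomputable def brCoef (n : ℕ) : ℝ :=
  (2 / π) * ((((2 * n + 3 : ℕ) : ℝ) / ((2 * n + 1 : ℕ) : ℝ)) ^ 2 - 1) *
    ((Nat.doubleFactorial (2 * n + 1) : ℝ)) ^ 2 / (Nat.factorial (2 * n + 3))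

open Finset Filter Topology MeasureTheory intervalIntegral

/-- `aSeq n = (2n-1)!! / (2n)!!`. -/
noncomputable def aSeq : ℕ → ℝ
  | 0 => 1
  | n + 1 => aSeq n * (2 * n + 1) / (2 * n + 2)

lemma aSeq_pos (n : ℕ) : 0 < aSeq n := by
  induction n with
  | zero => norm_num [aSeq]
  | succ n ih => rw [aSeq]; positivity

lemma aSeq_succ (n : ℕ) : aSeq (n + 1) = aSeq n * (2 * n + 1) / (2 * n + 2) := rfl

lemma aSeq_succ_eq (n : ℕ) :
    aSeq (n + 1) = (Nat.doubleFactorial (2 * n + 1) : ℝ) / (Nat.doubleFactorial (2 * n + 2) : ℝ) := by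
  induction n with
  | zero => norm_num [aSeq, Nat.doubleFactorial]
  | succ n ih =>
    have h1 : 2 * (n + 1) + 1 = (2 * n + 1) + 2 := by ring
    have h2 : 2 * (n + 1) + 2 = (2 * n + 2) + 2 := by ring
    rw [aSeq_succ, ih, h1, h2, Nat.doubleFactorial_add_two, Nat.doubleFactorial_add_two]
    have hd1 : ((Nat.doubleFactorial (2*n+2) : ℝ)) ≠ 0 := by
      exact_mod_cast (Nat.doubleFactorial_pos _).ne'
    push_cast
    rw [Nat.doubleFactorial_add_two, Nat.doubleFactorial_add_two]
    push_cast
    field_simp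
    ring

lemma brCoef_eq (n : ℕ) :
    brCoef n = 8 / π * aSeq n / ((2 * n + 1) * (2 * n + 3)) := by
  have hfac : (Nat.factorial (2 * n + 3)) = Nat.doubleFactorial (2*n+3) * Nat.doubleFactorial (2*n+2) := by
    have := Nat.factorial_eq_mul_doubleFactorial (2*n+2)
    convert this using 2
  have hdf3 : Nat.doubleFactorial (2*n+3) = (2*n+3) * Nat.doubleFactorial (2*n+1) := by
    have h : 2*n+3 = (2*n+1)+2 := by ring
    rw [h, Nat.doubleFactorial_add_two]
  have hdf1 : (Nat.doubleFactorial (2*n+1) : ℝ) = aSeq (n+1) * (Nat.doubleFactorial (2*n+2) : ℝ) := by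
    rw [aSeq_succ_eq]
    field_simp [(Nat.doubleFactorial_pos (2*n+2)).ne']
  have hd2 : ((Nat.doubleFactorial (2*n+2) : ℝ)) ≠ 0 := by
    exact_mod_cast (Nat.doubleFactorial_pos _).ne'
  have hπ : π ≠ 0 := Real.pi_ne_zero
  have h1 : ((2:ℝ) * n + 1) ≠ 0 := by positivity
  have h2 : ((2:ℝ) * n + 2) ≠ 0 := by positivity
  have h3 : ((2:ℝ) * n + 3) ≠ 0 := by positivity
  have ha : aSeq n ≠ 0 := (aSeq_pos n).ne'
  have hd0 : ((Nat.doubleFactorial (n * 2) : ℝ)) ≠ 0 := by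
    exact_mod_cast (Nat.doubleFactorial_pos _).ne'
  have hd0' : ((Nat.doubleFactorial (2 * n) : ℝ)) ≠ 0 := by
    exact_mod_cast (Nat.doubleFactorial_pos _).ne'
  rw [brCoef, hfac, hdf3]
  push_cast
  rw [hdf1, aSeq_succ]
  push_cast
  field_simp
  ring

lemma aSeq_J (n : ℕ) :
    ∑ k ∈ range (n + 1), aSeq k * aSeq (n - k) / (2 * ((n - k : ℕ) : ℝ) + 2) = aSeq (n + 1) := by
  have tel := Finset.sum_range_sub (fun k => (k : ℝ) / (n + 1) * aSeq k * aSeq (n + 1 - k)) (n + 1)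
  have hend : ((n + 1 : ℕ) : ℝ) / (n + 1) * aSeq (n + 1) * aSeq (n + 1 - (n + 1)) = aSeq (n + 1) := by
    simp only [Nat.sub_self, show aSeq 0 = (1:ℝ) from rfl, mul_one]
    push_cast
    rw [div_self (by positivity : (n:ℝ) + 1 ≠ 0), one_mul]
  have h0 : ((0 : ℕ) : ℝ) / (n + 1) * aSeq 0 * aSeq (n + 1 - 0) = 0 := by simp
  rw [hend, h0, sub_zero] at tel
  rw [← tel]
  refine Finset.sum_congr rfl fun k hk => ?_
  rw [mem_range] at hk
  have hkn : k ≤ n := by omega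
  obtain ⟨m, hm⟩ : ∃ m, n - k = m := ⟨n - k, rfl⟩
  have e1 : n + 1 - (k + 1) = m := by omega
  have e2 : n + 1 - k = m + 1 := by omega
  have hn : (n : ℝ) = (k : ℝ) + m := by exact_mod_cast congrArg (Nat.cast (R := ℝ)) (by omega : n = k + m)
  simp only [hm, e1, e2]
  rw [aSeq_succ, aSeq_succ, hn]
  have h1 : (2 : ℝ) * k + 2 ≠ 0 := by positivity
  have h2 : (2 : ℝ) * m + 2 ≠ 0 := by positivity
  have h3 : (k : ℝ) + m + 1 ≠ 0 := by positivity
  push_cast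
  field_simp
  ring

lemma aSeq_conv (n : ℕ) : ∑ k ∈ range (n + 1), aSeq k * aSeq (n - k) = 1 := by
  induction n with
  | zero => simp [aSeq]
  | succ n ih =>
    rw [Finset.sum_range_succ]
    have hlast : aSeq (n + 1) * aSeq (n + 1 - (n + 1)) = aSeq (n + 1) := by
      simp only [Nat.sub_self, show aSeq 0 = (1:ℝ) from rfl, mul_one]
    have hsplit : ∀ k ∈ range (n + 1),
        aSeq k * aSeq (n + 1 - k)
          = aSeq k * aSeq (n - k) - aSeq k * aSeq (n - k) / (2 * ((n - k : ℕ) : ℝ) + 2) := by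
      intro k hk
      rw [mem_range] at hk
      obtain ⟨m, hm⟩ : ∃ m, n - k = m := ⟨n - k, rfl⟩
      have e2 : n + 1 - k = m + 1 := by omega
      simp only [hm, e2]
      rw [aSeq_succ]
      have h2 : (2 : ℝ) * m + 2 ≠ 0 := by positivity
      field_simp
      ring
    rw [Finset.sum_congr rfl hsplit, Finset.sum_sub_distrib, ih, aSeq_J, hlast]
    ring

lemma aSeq_le_one (n : ℕ) : aSeq n ≤ 1 := by
  have h := aSeq_conv n
  have : aSeq n * aSeq (n - n) ≤ 1 := by
    rw [← h]
    refine Finset.single_le_sum (f := fun k => aSeq k * aSeq (n - k)) ?_ (by simp)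
    intro k _; exact le_of_lt (mul_pos (aSeq_pos _) (aSeq_pos _))
  simpa [Nat.sub_self, show aSeq 0 = (1:ℝ) from rfl] using this

lemma hasSum_aSeq_mul_geom {t : ℝ} (h0 : 0 ≤ t) (h1 : t < 1) :
    HasSum (fun n => aSeq n * t ^ n) (Real.sqrt (1 - t))⁻¹ := by
  have hsummable : Summable (fun n => aSeq n * t ^ n) := by
    refine Summable.of_nonneg_of_le (fun n => mul_nonneg (aSeq_pos n).le (pow_nonneg h0 n)) (fun n => ?_)
      (summable_geometric_of_lt_one h0 h1)
    calc aSeq n * t ^ n ≤ 1 * t ^ n := by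
          exact mul_le_mul_of_nonneg_right (aSeq_le_one n) (by positivity)
      _ = t ^ n := one_mul _
  set L := ∑' n, aSeq n * t ^ n with hL
  have hhs := hsummable.hasSum
  have hLnn : 0 ≤ L := tsum_nonneg fun n => mul_nonneg (aSeq_pos n).le (pow_nonneg h0 n)
  have hPtend : Tendsto (fun N => ∑ k ∈ range N, aSeq k * t ^ k) atTop (𝓝 L) :=
    hhs.tendsto_sum_nat
  -- square of partial sums
  set P := fun N => ∑ k ∈ range N, aSeq k * t ^ k with hP
  have hsq : ∀ N, P N ^ 2 = ∑ p ∈ range N ×ˢ range N, aSeq p.1 * aSeq p.2 * t ^ (p.1 + p.2) := by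
    intro N
    rw [sq, Finset.sum_mul_sum, ← Finset.sum_product']
    exact Finset.sum_congr rfl fun p _ => by rw [pow_add]; ring
  have hterm_nonneg : ∀ p : ℕ × ℕ, 0 ≤ aSeq p.1 * aSeq p.2 * t ^ (p.1 + p.2) := by
    intro p
    exact mul_nonneg (mul_nonneg (aSeq_pos p.1).le (aSeq_pos p.2).le) (pow_nonneg h0 _)
  have hdisj : ∀ M : ℕ, ((range M : Finset ℕ) : Set ℕ).PairwiseDisjoint
      (fun n => Finset.HasAntidiagonal.antidiagonal n) := by
    intro M i _ j _ hij
    rw [Function.onFun, Finset.disjoint_left]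
    intro p hpi hpj
    rw [Finset.HasAntidiagonal.mem_antidiagonal] at hpi hpj
    exact hij (hpi ▸ hpj ▸ rfl)
  have hDsum : ∀ M : ℕ, ∑ p ∈ (range M).biUnion (fun n => Finset.HasAntidiagonal.antidiagonal n),
      aSeq p.1 * aSeq p.2 * t ^ (p.1 + p.2) = ∑ n ∈ range M, t ^ n := by
    intro M
    rw [Finset.sum_biUnion (hdisj M)]
    refine Finset.sum_congr rfl fun n _ => ?_
    have : ∀ p ∈ Finset.HasAntidiagonal.antidiagonal n, aSeq p.1 * aSeq p.2 * t ^ (p.1 + p.2)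
        = aSeq p.1 * aSeq p.2 * t ^ n := by
      intro p hp
      rw [Finset.HasAntidiagonal.mem_antidiagonal] at hp
      rw [hp]
    rw [Finset.sum_congr rfl this, ← Finset.sum_mul, Finset.Nat.sum_antidiagonal_eq_sum_range_succ_mk, aSeq_conv, one_mul]
  have hgeom := hasSum_geometric_of_lt_one h0 h1
  have hlow : ∀ N, ∑ n ∈ range N, t ^ n ≤ P N ^ 2 := by
    intro N
    rw [hsq, ← hDsum N]
    refine Finset.sum_le_sum_of_subset_of_nonneg ?_ (fun p _ _ => hterm_nonneg p)
    intro p hp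
    rw [Finset.mem_biUnion] at hp
    obtain ⟨n, hn, hpn⟩ := hp
    rw [Finset.HasAntidiagonal.mem_antidiagonal] at hpn
    rw [Finset.mem_range] at hn
    rw [Finset.mem_product, Finset.mem_range, Finset.mem_range]
    omega
  have hup : ∀ N, P N ^ 2 ≤ (1 - t)⁻¹ := by
    intro N
    rw [hsq]
    calc ∑ p ∈ range N ×ˢ range N, aSeq p.1 * aSeq p.2 * t ^ (p.1 + p.2)
        ≤ ∑ p ∈ (range (2 * N)).biUnion (fun n => Finset.HasAntidiagonal.antidiagonal n),
            aSeq p.1 * aSeq p.2 * t ^ (p.1 + p.2) := by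
          refine Finset.sum_le_sum_of_subset_of_nonneg ?_ (fun p _ _ => hterm_nonneg p)
          intro p hp
          rw [Finset.mem_product, Finset.mem_range, Finset.mem_range] at hp
          rw [Finset.mem_biUnion]
          exact ⟨p.1 + p.2, Finset.mem_range.mpr (by omega), Finset.HasAntidiagonal.mem_antidiagonal.mpr rfl⟩
      _ = ∑ n ∈ range (2 * N), t ^ n := hDsum (2 * N)
      _ ≤ (1 - t)⁻¹ := sum_le_hasSum _ (fun n _ => by positivity) hgeom
  have hsqtend : Tendsto (fun N => P N ^ 2) atTop (𝓝 ((1 - t)⁻¹)) := by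
    refine tendsto_of_tendsto_of_tendsto_of_le_of_le ?_ tendsto_const_nhds hlow hup
    exact hgeom.tendsto_sum_nat
  have hsqtend' : Tendsto (fun N => P N ^ 2) atTop (𝓝 (L ^ 2)) := by
    exact (hPtend.pow 2)
  have hL2 : L ^ 2 = (1 - t)⁻¹ := tendsto_nhds_unique hsqtend' hsqtend
  have hLval : L = (Real.sqrt (1 - t))⁻¹ := by
    have : Real.sqrt (L ^ 2) = Real.sqrt ((1 - t)⁻¹) := by rw [hL2]
    rw [Real.sqrt_sq hLnn] at this
    rw [this, ← Real.sqrt_inv]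
  rw [← hLval]
  exact hhs

lemma brCoef_nonneg (n : ℕ) : 0 ≤ brCoef n := by
  rw [brCoef_eq]
  have := aSeq_pos n
  have := Real.pi_pos
  positivity

lemma summable_brCoef : Summable brCoef := by
  have hbase : Summable (fun n : ℕ => 8 / π * (1 / ((n : ℝ) + 1) ^ 2)) := by
    apply Summable.mul_left
    have : Summable (fun n : ℕ => 1 / ((n : ℝ)) ^ 2) :=
      Real.summable_one_div_nat_pow.mpr one_lt_two
    have := (summable_nat_add_iff 1).mpr this
    simpa using this
  refine Summable.of_nonneg_of_le brCoef_nonneg (fun n => ?_) hbase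
  rw [brCoef_eq]
  have hpi := Real.pi_pos
  have h1 : ((n : ℝ) + 1) ^ 2 ≤ (2 * n + 1) * (2 * n + 3) := by nlinarith [Nat.cast_nonneg (α := ℝ) n]
  have h2 : (0:ℝ) < ((n : ℝ) + 1) ^ 2 := by positivity
  have key : aSeq n / ((2 * (n:ℝ) + 1) * (2 * (n:ℝ) + 3)) ≤ 1 / ((n:ℝ) + 1) ^ 2 :=
    div_le_div₀ zero_le_one (aSeq_le_one n) h2 h1
  calc 8 / π * aSeq n / ((2 * (n:ℝ) + 1) * (2 * (n:ℝ) + 3))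
      = 8 / π * (aSeq n / ((2 * (n:ℝ) + 1) * (2 * (n:ℝ) + 3))) := by ring
    _ ≤ 8 / π * (1 / ((n:ℝ) + 1) ^ 2) := by
        exact mul_le_mul_of_nonneg_left key (by positivity)

-- interval integral value

lemma integral_pow_one_sub_sq (n : ℕ) :
    ∫ u in (0:ℝ)..1, u ^ (2 * n) * (1 - u ^ 2) = 2 / ((2 * (n:ℝ) + 1) * (2 * (n:ℝ) + 3)) := by
  have h : ∀ u : ℝ, u ^ (2 * n) * (1 - u ^ 2) = u ^ (2 * n) - u ^ (2 * n + 2) := by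
    intro u; ring
  simp_rw [h]
  rw [intervalIntegral.integral_sub (intervalIntegral.intervalIntegrable_pow _)
    (intervalIntegral.intervalIntegrable_pow _), integral_pow, integral_pow]
  have h1 : ((2 * n + 1 : ℕ) : ℝ) ≠ 0 := by positivity
  push_cast
  have e1 : (2:ℝ) * n + 1 ≠ 0 := by positivity
  have e2 : (2:ℝ) * n + 3 ≠ 0 := by positivity
  field_simp
  ring_nf

lemma integral_sqrt_one_sub_sq_half :
    ∫ u in (0:ℝ)..1, Real.sqrt (1 - u ^ 2) = π / 4 := by
  have hcont : Continuous fun u : ℝ => Real.sqrt (1 - u ^ 2) :=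
    (continuous_const.sub (continuous_pow 2)).sqrt
  have hsplit : (∫ u in (-1:ℝ)..0, Real.sqrt (1 - u ^ 2)) + (∫ u in (0:ℝ)..1, Real.sqrt (1 - u ^ 2))
      = ∫ u in (-1:ℝ)..1, Real.sqrt (1 - u ^ 2) :=
    intervalIntegral.integral_add_adjacent_intervals
      (hcont.intervalIntegrable _ _) (hcont.intervalIntegrable _ _)
  have hneg : (∫ u in (-1:ℝ)..0, Real.sqrt (1 - u ^ 2)) = ∫ u in (0:ℝ)..1, Real.sqrt (1 - u ^ 2) := by
    have := intervalIntegral.integral_comp_neg (a := (0:ℝ)) (b := 1)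
      (fun u => Real.sqrt (1 - u ^ 2))
    simp only [neg_zero] at this
    rw [← this]
    refine intervalIntegral.integral_congr fun u _ => ?_
    simp [neg_pow]
  rw [hneg] at hsplit
  rw [integral_sqrt_one_sub_sq] at hsplit
  linarith

lemma tsum_brCoef : ∑' n, brCoef n = 1 := by
  set μ := (volume : Measure ℝ).restrict (Set.Ioo (0:ℝ) 1) with hμ
  set f : ℕ → ℝ → ℝ := fun n u => 4 / π * aSeq n * (u ^ (2 * n) * (1 - u ^ 2)) with hf
  have hcont : ∀ n, Continuous (f n) := by
    intro n
    exact continuous_const.mul ((continuous_pow _).mul (continuous_const.sub (continuous_pow 2)))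
  have hint : ∀ n, ∫ u, f n u ∂μ = brCoef n := by
    intro n
    rw [hμ, ← MeasureTheory.integral_Ioc_eq_integral_Ioo,
      ← intervalIntegral.integral_of_le zero_le_one]
    rw [intervalIntegral.integral_const_mul, integral_pow_one_sub_sq, brCoef_eq]
    have hpi := Real.pi_pos
    have e1 : (2:ℝ) * n + 1 ≠ 0 := by positivity
    have e2 : (2:ℝ) * n + 3 ≠ 0 := by positivity
    field_simp
    ring
  have hintg : ∀ n, Integrable (f n) μ := by
    intro n
    have h : IntegrableOn (f n) (Set.Ioo 0 1) volume :=
      ((hcont n).integrableOn_Icc).mono_set Set.Ioo_subset_Icc_self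
    exact h
  have hnn : ∀ n, 0 ≤ᵐ[μ] f n := by
    intro n
    rw [hμ]
    filter_upwards [MeasureTheory.self_mem_ae_restrict measurableSet_Ioo] with u hu
    obtain ⟨hu0, hu1⟩ := hu
    have hpi := Real.pi_pos
    have h4 : (0:ℝ) ≤ 4 / π := by positivity
    simp only [Pi.zero_apply]
    exact mul_nonneg (mul_nonneg h4 (aSeq_pos n).le)
      (mul_nonneg (by positivity) (by nlinarith))
  have hlin : ∀ n, ∫⁻ u, ‖f n u‖₊ ∂μ = ENNReal.ofReal (brCoef n) := by
    intro n
    rw [← hint n, MeasureTheory.ofReal_integral_eq_lintegral_ofReal (hintg n) (hnn n)]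
    refine lintegral_congr_ae ?_
    filter_upwards [hnn n] with u hu
    rw [← Real.enorm_eq_ofReal hu]
    rfl
  have hlintsum : (∑' n, ∫⁻ u, ‖f n u‖₊ ∂μ) ≠ ⊤ := by
    simp_rw [hlin]
    rw [← ENNReal.ofReal_tsum_of_nonneg brCoef_nonneg summable_brCoef]
    exact ENNReal.ofReal_ne_top
  have hswap := MeasureTheory.integral_tsum (fun n => (hcont n).aestronglyMeasurable) hlintsum
  have hptwise : ∀ᵐ u ∂μ, (∑' n, f n u) = 4 / π * Real.sqrt (1 - u ^ 2) := by
    rw [hμ]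
    filter_upwards [MeasureTheory.self_mem_ae_restrict measurableSet_Ioo] with u hu
    obtain ⟨hu0, hu1⟩ := hu
    have ht0 : (0:ℝ) ≤ u ^ 2 := sq_nonneg u
    have ht1 : u ^ 2 < 1 := by nlinarith
    have hs := hasSum_aSeq_mul_geom ht0 ht1
    have hs2 := hs.mul_left (4 / π * (1 - u ^ 2))
    have heq : ∀ n : ℕ, 4 / π * (1 - u ^ 2) * (aSeq n * (u ^ 2) ^ n) = f n u := by
      intro n
      rw [hf]
      simp only [← pow_mul]
      ring_nf
    rw [show (fun n => 4 / π * (1 - u ^ 2) * (aSeq n * (u ^ 2) ^ n)) = fun n => f n u from funext heq] at hs2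
    rw [hs2.tsum_eq]
    calc 4 / π * (1 - u ^ 2) * (Real.sqrt (1 - u ^ 2))⁻¹
        = 4 / π * ((1 - u ^ 2) / Real.sqrt (1 - u ^ 2)) := by ring
      _ = 4 / π * Real.sqrt (1 - u ^ 2) := by rw [Real.div_sqrt]
  have hfinal : ∫ u, (∑' n, f n u) ∂μ = 1 := by
    rw [MeasureTheory.integral_congr_ae hptwise, MeasureTheory.integral_const_mul]
    have : ∫ u, Real.sqrt (1 - u ^ 2) ∂μ = π / 4 := by
      rw [hμ, ← MeasureTheory.integral_Ioc_eq_integral_Ioo,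
        ← intervalIntegral.integral_of_le zero_le_one]
      exact integral_sqrt_one_sub_sq_half
    rw [this]
    field_simp
  rw [tsum_congr fun n => (hint n).symm, ← hswap, hfinal]

theorem brCoef_properties :
    brCoef 0 = 8 / (3 * π) ∧ (∀ n : ℕ, 0 ≤ brCoef n) ∧ HasSum brCoef 1 := by
  refine ⟨?_, brCoef_nonneg, ?_⟩
  · rw [brCoef_eq]
    norm_num [show aSeq 0 = (1:ℝ) from rfl]
    field_simp
  · exact (summable_brCoef.hasSum_iff).mpr tsum_brCoef
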